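/- Let H be an orderable k-hypergraph on V with |V| = n = km, with an elimination order v_1,...,v_n in which each vertex is designated dominating or isolating and all vertices v_j with j < k are designated dominating. For j = 1,...,n let d_j and i_j denote respectively the number of dominating and of isolating vertices with index at least j, and set r_j := (k-1)·d_j - i_j. Then H has a perfect matching if and only if r_j ≥ 0 for all j = 1,...,n. -/

import Mathlib

variable {V : Type*} [DecidableEq V]

/-- Position `i` of the ordering `l` is *dominating* for the `k`-hypergraph `H`:
every `k`-set `E` with `l.get i ∈ E` contained in the first `i+1` vertices of `l`
is an edge of `H`. -/
def DomAt (k : ℕ) (H : Finset (Finset V)) (l : List V) (i : Fin l.length) : Prop :=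
  ∀ E : Finset V, E.card = k → l.get i ∈ E →
    (∀ x ∈ E, x ∈ l.take ((i : ℕ) + 1)) → E ∈ H

/-- Position `i` of the ordering `l` is *isolating* for the `k`-hypergraph `H`:
every `k`-set `E` with `l.get i ∈ E` contained in the first `i+1` vertices of `l`
is a non-edge of `H`. -/
def IsoAt (k : ℕ) (H : Finset (Finset V)) (l : List V) (i : Fin l.length) : Prop :=
  ∀ E : Finset V, E.card = k → l.get i ∈ E →
    (∀ x ∈ E, x ∈ l.take ((i : ℕ) + 1)) → E ∉ H

/-- `l` is an elimination order for `H`: each position is dominating or isolating. -/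
def IsElimOrder (k : ℕ) (H : Finset (Finset V)) (l : List V) : Prop :=
  ∀ i : Fin l.length, DomAt k H l i ∨ IsoAt k H l i

/-- `H` is orderable on vertex set `W`: some enumeration of `W` is an elimination order. -/
def Orderable (k : ℕ) (H : Finset (Finset V)) (W : Finset V) : Prop :=
  ∃ l : List V, l.Nodup ∧ l.toFinset = W ∧ IsElimOrder k H l

/-- `H` is separable on vertex set `W`: for some labeling `a : V → ℤ`,
`H = {E ⊆ W : |E| = k, a(E) ≥ 0}`. -/
def Separable (k : ℕ) (H : Finset (Finset V)) (W : Finset V) : Prop :=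
  ∃ a : V → ℤ, ∀ E : Finset V, E ∈ H ↔ (E ⊆ W ∧ E.card = k ∧ 0 ≤ ∑ v ∈ E, a v)

/-- `M` is a perfect matching of the vertex set `W`: its edges are pairwise
disjoint and their union is `W`. -/
def IsPerfectMatching (M : Finset (Finset V)) (W : Finset V) : Prop :=
  (M : Set (Finset V)).PairwiseDisjoint id ∧ M.biUnion id = W




lemma rank_lt {α : Type*} [LinearOrder α] {S : Finset α} {c : ℕ} (h : S.card = c) (r : Fin c) :
    (S.filter (· < (S.orderIsoOfFin h r : α))).card = r := by
  have himg : S.filter (· < (S.orderIsoOfFin h r : α))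
      = (Finset.univ.filter (· < r)).image (fun r' => (S.orderIsoOfFin h r' : α)) := by
    ext x
    simp only [Finset.mem_filter, Finset.mem_image, Finset.mem_univ, true_and]
    constructor
    · rintro ⟨hx, hlt⟩
      refine ⟨(S.orderIsoOfFin h).symm ⟨x, hx⟩, ?_, by simp⟩
      have := @OrderIso.lt_iff_lt _ _ _ _ (S.orderIsoOfFin h) ((S.orderIsoOfFin h).symm ⟨x, hx⟩) r
      rw [OrderIso.apply_symm_apply] at this
      rw [← this]
      exact Subtype.coe_lt_coe.mp (by simpa using hlt)
    · rintro ⟨r', hr', rfl⟩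
      exact ⟨(S.orderIsoOfFin h r').2, by exact_mod_cast (S.orderIsoOfFin h).lt_iff_lt.2 hr'⟩
  rw [himg, Finset.card_image_of_injective _ (fun a b hab => by
      exact (S.orderIsoOfFin h).injective (Subtype.ext hab))]
  rw [show (Finset.univ.filter (· < r)) = Finset.Iio r by ext x; simp]
  exact Fin.card_Iio r

lemma rank_gt {α : Type*} [LinearOrder α] {S : Finset α} {c : ℕ} (h : S.card = c) (r : Fin c) :
    (S.filter ((S.orderIsoOfFin h r : α) < ·)).card = c - 1 - r := by
  have himg : S.filter ((S.orderIsoOfFin h r : α) < ·)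
      = (Finset.univ.filter (r < ·)).image (fun r' => (S.orderIsoOfFin h r' : α)) := by
    ext x
    simp only [Finset.mem_filter, Finset.mem_image, Finset.mem_univ, true_and]
    constructor
    · rintro ⟨hx, hlt⟩
      refine ⟨(S.orderIsoOfFin h).symm ⟨x, hx⟩, ?_, by simp⟩
      have := @OrderIso.lt_iff_lt _ _ _ _ (S.orderIsoOfFin h) r ((S.orderIsoOfFin h).symm ⟨x, hx⟩)
      rw [OrderIso.apply_symm_apply] at this
      rw [← this]
      exact Subtype.coe_lt_coe.mp (by simpa using hlt)
    · rintro ⟨r', hr', rfl⟩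
      exact ⟨(S.orderIsoOfFin h r').2, by exact_mod_cast (S.orderIsoOfFin h).lt_iff_lt.2 hr'⟩
  rw [himg, Finset.card_image_of_injective _ (fun a b hab => by
      exact (S.orderIsoOfFin h).injective (Subtype.ext hab))]
  rw [show (Finset.univ.filter (r < ·)) = Finset.Ioi r by ext x; simp]
  exact Fin.card_Ioi r


lemma mem_drop_finRange {n j : ℕ} {i : Fin n} : i ∈ (List.finRange n).drop j ↔ j ≤ (i : ℕ) := by
  constructor
  · intro h
    obtain ⟨p, hp, he⟩ := List.mem_iff_getElem.1 h
    rw [List.getElem_drop] at he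
    have : (i : ℕ) = j + p := by
      rw [← he]; simp [List.getElem_finRange]
    omega
  · intro h
    have hi : (i : ℕ) - j < ((List.finRange n).drop j).length := by
      simp [List.length_drop]; omega
    refine List.mem_iff_getElem.2 ⟨(i : ℕ) - j, hi, ?_⟩
    rw [List.getElem_drop]
    apply Fin.ext
    simp [List.getElem_finRange]
    omega

lemma length_filter_drop (l : List V) (p : V → Prop) [DecidablePred p] (j : ℕ) :
    ((l.drop j).filter (fun x => p x)).length
      = (Finset.univ.filter (fun i : Fin l.length => j ≤ (i : ℕ) ∧ p (l.get i))).card := by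
  have h1 : l.drop j = ((List.finRange l.length).drop j).map l.get := by
    rw [List.map_drop, List.map_get_finRange]
  rw [h1, List.filter_map, List.length_map]
  have hnd : (((List.finRange l.length).drop j).filter ((fun x => decide (p x)) ∘ l.get)).Nodup :=
    (((List.drop_sublist j _).nodup (List.nodup_finRange _))).filter _
  rw [← List.toFinset_card_of_nodup hnd]
  congr 1
  ext i
  simp only [List.mem_toFinset, List.mem_filter, Finset.mem_filter, Finset.mem_univ, true_and,
    mem_drop_finRange, Function.comp_apply, decide_eq_true_eq]

lemma get_mem_take {l : List V} (i t : Fin l.length) (h : (i : ℕ) ≤ (t : ℕ)) :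
    l.get i ∈ l.take ((t : ℕ) + 1) := by
  have hlt : (i : ℕ) < (l.take ((t : ℕ) + 1)).length := by
    rw [List.length_take]; exact lt_min (by omega) i.2
  have e : (l.take ((t : ℕ) + 1))[(i : ℕ)]'hlt = l[(i : ℕ)]'i.2 := List.getElem_take
  rw [List.get_eq_getElem, ← e]
  exact List.getElem_mem hlt

lemma forward_count (k : ℕ) (H : Finset (Finset V)) (l : List V) (D : Finset V)
    (hl : l.Nodup)
    (hH : ∀ E ∈ H, E ⊆ l.toFinset ∧ E.card = k)
    (hdes : ∀ i : Fin l.length,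
      (l.get i ∈ D → DomAt k H l i) ∧ (l.get i ∉ D → IsoAt k H l i))
    (M : Finset (Finset V)) (hMH : M ⊆ H)
    (hdisj : (M : Set (Finset V)).PairwiseDisjoint id)
    (hbi : M.biUnion id = l.toFinset) (j : ℕ) :
    (Finset.univ.filter (fun i : Fin l.length => j ≤ (i : ℕ) ∧ ¬ l.get i ∈ D)).card
      ≤ (k - 1) * (Finset.univ.filter (fun i : Fin l.length => j ≤ (i : ℕ) ∧ l.get i ∈ D)).card := by
  classical
  have hedge : ∀ i : Fin l.length, ∃ E, E ∈ M ∧ l.get i ∈ E := by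
    intro i
    have hmem : l.get i ∈ M.biUnion id := by
      rw [hbi]; exact List.mem_toFinset.2 (l.get_mem i)
    simpa using Finset.mem_biUnion.1 hmem
  choose E hEM hEmem using hedge
  have hEeq : ∀ i i' : Fin l.length, ∀ x, x ∈ E i → x ∈ E i' → E i = E i' := by
    intro i i' x hx hx'
    by_contra hne
    exact (Finset.disjoint_left.1 (hdisj (hEM i) (hEM i') hne) hx) hx'
  set T : Fin l.length → Finset (Fin l.length) :=
    fun i => Finset.univ.filter (fun t => l.get t ∈ E i) with hT
  have hTmem : ∀ i t : Fin l.length, t ∈ T i ↔ l.get t ∈ E i := by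
    intro i t; simp [hT]
  have hTne : ∀ i, (T i).Nonempty := fun i => ⟨i, (hTmem i i).2 (hEmem i)⟩
  set f : Fin l.length → Fin l.length := fun i => (T i).max' (hTne i) with hf
  have hle : ∀ i : Fin l.length, i ≤ f i := fun i => (T i).le_max' i ((hTmem i i).2 (hEmem i))
  have hfmem : ∀ i, l.get (f i) ∈ E i := fun i => (hTmem i (f i)).1 ((T i).max'_mem (hTne i))
  have hfmax : ∀ i : Fin l.length, ∀ x ∈ E i, x ∈ l.take ((f i : ℕ) + 1) := by
    intro i x hx
    have hxl : x ∈ l := List.mem_toFinset.1 ((hH _ (hMH (hEM i))).1 hx)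
    obtain ⟨t, ht⟩ := List.mem_iff_get.1 hxl
    subst ht
    exact get_mem_take t (f i) ((T i).le_max' t ((hTmem i t).2 hx))
  have hfD : ∀ i, l.get (f i) ∈ D := by
    intro i
    by_contra hnd
    exact (hdes (f i)).2 hnd (E i) (hH _ (hMH (hEM i))).2 (hfmem i) (hfmax i) (hMH (hEM i))
  apply Finset.card_le_mul_card_image_of_maps_to (f := f)
  · intro i hi
    simp only [Finset.mem_filter, Finset.mem_univ, true_and] at hi ⊢
    exact ⟨le_trans hi.1 (hle i), hfD i⟩
  · intro b hb
    simp only [Finset.mem_filter, Finset.mem_univ, true_and] at hb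
    have hcard : ((E b).erase (l.get b)).card = k - 1 := by
      rw [Finset.card_erase_of_mem (hEmem b), (hH _ (hMH (hEM b))).2]
    rw [← hcard]
    apply Finset.card_le_card_of_injOn (fun t => l.get t)
    · intro i hi
      simp only [Finset.mem_coe, Finset.mem_filter, Finset.mem_univ, true_and] at hi
      have hEi : E i = E b := by
        apply hEeq i b (l.get b)
        · rw [← hi.2]; exact hfmem i
        · exact hEmem b
      refine Finset.mem_erase.2 ⟨?_, by rw [← hEi]; exact hEmem i⟩
      intro (hgeq : l.get i = l.get b)
      exact hi.1.2 (hgeq ▸ hb.2)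
    · intro a _ a' _ hgg
      exact List.nodup_iff_injective_get.1 hl hgg

lemma card_split_cond {ι : Type*} (s : Finset ι) (a p : ι → Prop)
    [DecidablePred a] [DecidablePred p] :
    (s.filter (fun i => a i ∧ p i)).card + (s.filter (fun i => a i ∧ ¬ p i)).card
      = (s.filter a).card := by
  classical
  have h1 : s.filter (fun i => a i ∧ p i) = (s.filter a).filter p := by
    ext i; simp only [Finset.mem_filter]; tauto
  have h2 : s.filter (fun i => a i ∧ ¬ p i) = (s.filter a).filter (fun i => ¬ p i) := by
    ext i; simp only [Finset.mem_filter]; tauto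
  rw [h1, h2]
  exact Finset.card_filter_add_card_filter_not p

lemma backward_construct (k m : ℕ) (H : Finset (Finset V)) (l : List V) (D : Finset V)
    (hl : l.Nodup) (hlen : l.length = k * m) (hk : 0 < k) (hm : 0 < m)
    (hdom : ∀ i : Fin l.length, l.get i ∈ D → DomAt k H l i)
    (hr : ∀ j < l.length,
      (Finset.univ.filter (fun i : Fin l.length => j ≤ (i : ℕ) ∧ ¬ l.get i ∈ D)).card
        ≤ (k - 1) * (Finset.univ.filter (fun i : Fin l.length => j ≤ (i : ℕ) ∧ l.get i ∈ D)).card) :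
    ∃ M : Finset (Finset V), M ⊆ H ∧ IsPerfectMatching M l.toFinset := by
  classical
  have hgetinj : Function.Injective l.get := List.nodup_iff_injective_get.1 hl
  set Dset : Finset (Fin l.length) := Finset.univ.filter (fun i => l.get i ∈ D) with hDset
  set c := Dset.card with hc
  -- m ≤ c
  have hmc : m ≤ c := by
    have h0 := hr 0 (by show (0:ℕ) < l.length; rw [hlen]; exact Nat.mul_pos hk hm)
    have hsplit : (Finset.univ.filter (fun i : Fin l.length => 0 ≤ (i:ℕ) ∧ l.get i ∈ D)).card
        + (Finset.univ.filter (fun i : Fin l.length => 0 ≤ (i:ℕ) ∧ ¬ l.get i ∈ D)).card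
        = (Finset.univ.filter (fun i : Fin l.length => 0 ≤ (i:ℕ))).card :=
      card_split_cond Finset.univ (fun i : Fin l.length => 0 ≤ (i:ℕ)) (fun i => l.get i ∈ D)
    have hall : (Finset.univ.filter (fun i : Fin l.length => 0 ≤ (i:ℕ))).card = l.length := by
      rw [show Finset.univ.filter (fun i : Fin l.length => 0 ≤ (i:ℕ)) = Finset.univ by
            ext i; simp]
      simp
    have hceq : (Finset.univ.filter (fun i : Fin l.length => 0 ≤ (i:ℕ) ∧ l.get i ∈ D)).card = c := by
      rw [hc, hDset]
      congr 1
      ext i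
      simp
    rw [hall] at hsplit
    rw [hceq] at hsplit h0
    have hkd : k * m ≤ k * c := by
      have h1 : (k-1)*c + c = k * c := by
        have : (k - 1) + 1 = k := Nat.succ_pred_eq_of_pos hk
        calc (k-1)*c + c = ((k-1)+1)*c := by ring
        _ = k * c := by rw [this]
      omega
    exact Nat.le_of_mul_le_mul_left hkd hk
  have hc0 : 0 < c := lt_of_lt_of_le hm hmc
  set iso1 := Dset.orderIsoOfFin (rfl : Dset.card = c) with hiso1
  -- tops
  have hrank : ∀ s : ℕ, c - 1 - s < c := fun s => by omega
  set tops : ℕ → Fin l.length := fun s => (iso1 ⟨c - 1 - s, hrank s⟩ : Fin l.length) with htops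
  have htopsD : ∀ s, l.get (tops s) ∈ D := by
    intro s
    have hmem := (iso1 ⟨c - 1 - s, hrank s⟩).2
    have h2 : tops s ∈ Dset := by simp only [htops]; exact hmem
    rw [hDset] at h2
    exact (Finset.mem_filter.mp h2).2
  have htopsmono : ∀ s s', s < s' → s' < m → tops s' < tops s := by
    intro s s' hss hs'
    have : (⟨c - 1 - s', hrank s'⟩ : Fin c) < ⟨c - 1 - s, hrank s⟩ := by
      simp only [Fin.mk_lt_mk]; omega
    exact Subtype.coe_lt_coe.2 (iso1.lt_iff_lt.2 this)
  -- F2 : number of dominating indices above tops s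
  have hF2 : ∀ s < m, (Dset.filter (tops s < ·)).card = s := by
    intro s hs
    have := rank_gt (rfl : Dset.card = c) ⟨c - 1 - s, hrank s⟩
    rw [← hiso1] at this
    rw [htops]
    rw [this]
    simp only
    omega
  -- F4 : key lower bound on tops
  have hF4 : ∀ s < m, l.length - k * s - 1 ≤ (tops s : ℕ) := by
    intro s hs
    set t := (tops s : ℕ) with ht
    by_cases hcase : t + 1 < l.length
    · have hrt := hr (t + 1) hcase
      have hdomeq : (Finset.univ.filter (fun i : Fin l.length => t + 1 ≤ (i:ℕ) ∧ l.get i ∈ D))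
          = Dset.filter (tops s < ·) := by
        rw [hDset, Finset.filter_filter]
        congr 1; funext i
        have : (tops s < i) ↔ t + 1 ≤ (i : ℕ) := by
          rw [Fin.lt_def]; omega
        rw [eq_iff_iff]; tauto
      have hIci : (Finset.univ.filter (fun i : Fin l.length => t + 1 ≤ (i:ℕ))).card = l.length - (t+1) := by
        rw [show Finset.univ.filter (fun i : Fin l.length => t + 1 ≤ (i:ℕ)) = Finset.Ici (⟨t+1, hcase⟩ : Fin l.length) by
              ext x; simp [Fin.le_def]]
        rw [Fin.card_Ici]
      have hsplit : (Finset.univ.filter (fun i : Fin l.length => t + 1 ≤ (i:ℕ) ∧ l.get i ∈ D)).card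
          + (Finset.univ.filter (fun i : Fin l.length => t + 1 ≤ (i:ℕ) ∧ ¬ l.get i ∈ D)).card
          = l.length - (t+1) := by
        rw [← hIci]
        exact card_split_cond Finset.univ (fun i : Fin l.length => t + 1 ≤ (i:ℕ)) (fun i => l.get i ∈ D)
      beta_reduce at hsplit
      rw [hdomeq, hF2 s hs] at hrt hsplit
      have hks : (k-1)*s + s = k * s := by
        have hkk : (k - 1) + 1 = k := Nat.succ_pred_eq_of_pos hk
        calc (k-1)*s + s = ((k-1)+1)*s := by ring
        _ = k * s := by rw [hkk]
      omega
    · have : t < l.length := (tops s).2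
      omega
  -- tops injective on range m
  have htopinj : ∀ s s', s < m → s' < m → tops s = tops s' → s = s' := by
    intro s s' hs hs' he
    by_contra hne
    rcases lt_or_gt_of_ne hne with h | h
    · exact absurd he.symm (ne_of_lt (htopsmono s s' h hs'))
    · exact absurd he (ne_of_lt (htopsmono s' s h hs))
  set topsSet : Finset (Fin l.length) := (Finset.range m).image tops with htopsSet
  have htopsSetcard : topsSet.card = m := by
    rw [htopsSet, Finset.card_image_of_injOn, Finset.card_range]
    intro s hs s' hs' he
    exact htopinj s s' (Finset.mem_range.1 hs) (Finset.mem_range.1 hs') he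
  set Q : Finset (Fin l.length) := Finset.univ \ topsSet with hQdef
  have hQcard : Q.card = (k-1) * m := by
    rw [hQdef, Finset.card_sdiff_of_subset (Finset.subset_univ _), htopsSetcard]
    have e1 : (k-1)*m + m = k*m := by
      have hkk : (k - 1) + 1 = k := Nat.succ_pred_eq_of_pos hk
      calc (k-1)*m + m = ((k-1)+1)*m := by ring
      _ = k*m := by rw [hkk]
    simp only [Finset.card_univ, Fintype.card_fin]
    omega
  set iso2 := Q.orderIsoOfFin hQcard with hiso2
  set chunk : ℕ → Finset (Fin l.length) := fun s =>
    (Finset.univ.filter (fun r : Fin ((k-1)*m) =>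
      (k-1)*(m-1-s) ≤ (r:ℕ) ∧ (r:ℕ) < (k-1)*(m-s))).image (fun r => (iso2 r : Fin l.length))
    with hchunk
  have hchunkQ : ∀ s, chunk s ⊆ Q := by
    intro s x hx
    rw [hchunk] at hx
    obtain ⟨r, _, rfl⟩ := Finset.mem_image.1 hx
    exact (iso2 r).2
  -- number of tops below tops s
  have htopsbelow : ∀ s < m, (topsSet.filter (· < tops s)).card = m - 1 - s := by
    intro s hs
    have he : topsSet.filter (· < tops s) = ((Finset.range m).filter (fun s' => s < s')).image tops := by
      ext x
      simp only [htopsSet, Finset.mem_filter, Finset.mem_image, Finset.mem_range]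
      constructor
      · rintro ⟨⟨s', hs', rfl⟩, hlt⟩
        refine ⟨s', ⟨hs', ?_⟩, rfl⟩
        by_contra hle
        push_neg at hle
        rcases eq_or_lt_of_le hle with h | h
        · subst h; exact lt_irrefl _ hlt
        · exact absurd hlt (not_lt.2 (le_of_lt (htopsmono s' s h hs)))
      · rintro ⟨s', ⟨hs', hss'⟩, rfl⟩
        exact ⟨⟨s', hs', rfl⟩, htopsmono s s' hss' hs'⟩
    rw [he, Finset.card_image_of_injOn (fun a ha b hb hab =>
      htopinj a b (Finset.mem_range.1 (Finset.mem_filter.1 ha).1)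
        (Finset.mem_range.1 (Finset.mem_filter.1 hb).1) hab)]
    rw [show (Finset.range m).filter (fun s' => s < s') = Finset.Ico (s+1) m by
          ext x; simp [Finset.mem_Ico]; omega]
    rw [Nat.card_Ico]
    omega
  -- Q elements below tops s
  have hQbelow : ∀ s < m, (Q.filter (· < tops s)).card + (m - 1 - s) = (tops s : ℕ) := by
    intro s hs
    have h1 : Q.filter (· < tops s) = (Finset.univ.filter (· < tops s)) \ topsSet := by
      rw [hQdef]; ext x; simp only [Finset.mem_sdiff, Finset.mem_filter, Finset.mem_univ, true_and]
      tauto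
    have h2 : (Finset.univ.filter (· < tops s)) ∩ topsSet = topsSet.filter (· < tops s) := by
      ext x; simp only [Finset.mem_inter, Finset.mem_filter, Finset.mem_univ, true_and]; tauto
    have h3 := Finset.card_sdiff_add_card_inter (Finset.univ.filter (· < tops s)) topsSet
    rw [h2, htopsbelow s hs] at h3
    have h4 : (Finset.univ.filter (· < tops s)).card = (tops s : ℕ) := by
      rw [show Finset.univ.filter (· < tops s) = Finset.Iio (tops s) by ext x; simp]
      exact Fin.card_Iio _
    rw [← h1] at h3
    omega
  have hQlt : ∀ s < m, (k-1)*(m-s) ≤ (Q.filter (· < tops s)).card := by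
    intro s hs
    have hb := hQbelow s hs
    have hf4 := hF4 s hs
    have e1 : (k-1)*(m-s) + (m-s) = k*(m-s) := by
      have hkk : (k - 1) + 1 = k := Nat.succ_pred_eq_of_pos hk
      calc (k-1)*(m-s) + (m-s) = ((k-1)+1)*(m-s) := by ring
      _ = _ := by rw [hkk]
    have e2 : k*(m-s) + k*s = k*m := by
      rw [← Nat.mul_add]
      congr 1
      omega
    omega
  -- chunk elements are below tops s
  have hchunklt : ∀ s < m, ∀ x ∈ chunk s, x < tops s := by
    intro s hs x hx
    rw [hchunk] at hx
    obtain ⟨r, hr', rfl⟩ := Finset.mem_image.1 hx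
    simp only [Finset.mem_filter, Finset.mem_univ, true_and] at hr'
    by_contra hge
    push_neg at hge
    have hsub : Q.filter (· < tops s) ⊆ Q.filter (· < (iso2 r : Fin l.length)) := by
      intro y hy
      rw [Finset.mem_filter] at hy ⊢
      exact ⟨hy.1, lt_of_lt_of_le hy.2 hge⟩
    have hcard := Finset.card_le_card hsub
    rw [rank_lt hQcard r] at hcard
    have := hQlt s hs
    omega
  -- chunk cardinality
  have hiso2inj : Function.Injective (fun r => ((iso2 r : Fin l.length))) :=
    fun a b hab => iso2.injective (Subtype.ext hab)
  have hchunkcard : ∀ s < m, (chunk s).card = k - 1 := by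
    intro s hs
    have hble : (k-1)*(m-s) ≤ (k-1)*m := Nat.mul_le_mul_left _ (by omega)
    rw [hchunk]
    rw [Finset.card_image_of_injective _ hiso2inj]
    have hval : (Finset.univ.filter (fun r : Fin ((k-1)*m) =>
        (k-1)*(m-1-s) ≤ (r:ℕ) ∧ (r:ℕ) < (k-1)*(m-s))).image Fin.val
        = Finset.Ico ((k-1)*(m-1-s)) ((k-1)*(m-s)) := by
      ext x
      simp only [Finset.mem_image, Finset.mem_filter, Finset.mem_univ, true_and, Finset.mem_Ico]
      constructor
      · rintro ⟨r, ⟨h1, h2⟩, rfl⟩; exact ⟨h1, h2⟩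
      · rintro ⟨h1, h2⟩; exact ⟨⟨x, lt_of_lt_of_le h2 hble⟩, ⟨h1, h2⟩, rfl⟩
    have hcard : (Finset.univ.filter (fun r : Fin ((k-1)*m) =>
        (k-1)*(m-1-s) ≤ (r:ℕ) ∧ (r:ℕ) < (k-1)*(m-s))).card
        = (Finset.Ico ((k-1)*(m-1-s)) ((k-1)*(m-s))).card := by
      rw [← hval, Finset.card_image_of_injective _ Fin.val_injective]
    rw [hcard, Nat.card_Ico]
    have hms : m - s = (m-1-s) + 1 := by omega
    have hba : (k-1)*(m-s) = (k-1)*(m-1-s) + (k-1) := by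
      rw [hms, Nat.mul_add, Nat.mul_one]
    omega
  -- chunks pairwise disjoint
  have hchunkdisj : ∀ s s', s < m → s' < m → s ≠ s' → Disjoint (chunk s) (chunk s') := by
    have key : ∀ s s', s < s' → Disjoint (chunk s) (chunk s') := by
      intro s s' hss
      rw [Finset.disjoint_left]
      intro x hx hx'
      rw [hchunk] at hx hx'
      obtain ⟨r, hr1, hre⟩ := Finset.mem_image.1 hx
      obtain ⟨r', hr2, hre'⟩ := Finset.mem_image.1 hx'
      have : r = r' := hiso2inj (hre.trans hre'.symm)
      subst this
      simp only [Finset.mem_filter, Finset.mem_univ, true_and] at hr1 hr2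
      have hmul : (k-1)*(m-s') ≤ (k-1)*(m-1-s) := Nat.mul_le_mul_left _ (by omega)
      omega
    intro s s' hs hs' hne
    rcases lt_or_gt_of_ne hne with h | h
    · exact key s s' h
    · exact (key s' s h).symm
  -- chunks cover Q
  have hchunkcover : ∀ q ∈ Q, ∃ s < m, q ∈ chunk s := by
    intro q hq
    obtain ⟨r, hre⟩ : ∃ r : Fin ((k-1)*m), (iso2 r : Fin l.length) = q :=
      ⟨iso2.symm ⟨q, hq⟩, by simp⟩
    have hk2 : 0 < k - 1 := by
      rcases Nat.lt_or_ge (k-1) 1 with h | h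
      · exfalso
        have h2 : (r:ℕ) < (k-1)*m := r.2
        have h3 : (k-1)*m = 0 := by rw [Nat.lt_one_iff.mp h, Nat.zero_mul]
        omega
      · omega
    obtain ⟨d, hdub, hdub2⟩ : ∃ d, (k-1)*d ≤ (r:ℕ) ∧ (r:ℕ) < (k-1)*d + (k-1) := by
      refine ⟨(r:ℕ)/(k-1), ?_, ?_⟩
      · calc (k-1)*((r:ℕ)/(k-1)) = (r:ℕ)/(k-1)*(k-1) := Nat.mul_comm _ _
          _ ≤ (r:ℕ) := Nat.div_mul_le_self _ _
      · have e := Nat.div_add_mod (r:ℕ) (k-1)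
        have hmod : (r:ℕ) % (k-1) < k-1 := Nat.mod_lt _ hk2
        omega
    have hdlt : d < m := by
      by_contra hge
      push_neg at hge
      have h1 : (k-1)*m ≤ (k-1)*d := Nat.mul_le_mul_left _ hge
      have h2 := r.2
      omega
    refine ⟨m - 1 - d, by omega, ?_⟩
    rw [hchunk]
    refine Finset.mem_image.2 ⟨r, ?_, hre⟩
    refine Finset.mem_filter.2 ⟨Finset.mem_univ _, ?_, ?_⟩
    · rw [show m - 1 - (m - 1 - d) = d by omega]; omega
    · rw [show m - (m - 1 - d) = d + 1 by omega, Nat.mul_add, Nat.mul_one]; omega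
  -- blocks
  set blk : ℕ → Finset (Fin l.length) := fun s => insert (tops s) (chunk s) with hblk
  have htopsmem : ∀ s < m, tops s ∈ topsSet := by
    intro s hs; rw [htopsSet]; exact Finset.mem_image.2 ⟨s, Finset.mem_range.2 hs, rfl⟩
  have htopnotchunk : ∀ s s', s < m → tops s ∉ chunk s' := by
    intro s s' hs hmem
    have hQm := hchunkQ s' hmem
    rw [hQdef] at hQm
    exact (Finset.mem_sdiff.1 hQm).2 (htopsmem s hs)
  have hblkcard : ∀ s < m, (blk s).card = k := by
    intro s hs
    rw [hblk]
    rw [Finset.card_insert_of_notMem (htopnotchunk s s hs), hchunkcard s hs]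
    omega
  have hblkdisj : ∀ s s', s < m → s' < m → s ≠ s' → Disjoint (blk s) (blk s') := by
    intro s s' hs hs' hne
    rw [Finset.disjoint_left]
    intro x hx hx'
    rw [hblk] at hx hx'
    rcases Finset.mem_insert.1 hx with rfl | hx1
    · rcases Finset.mem_insert.1 hx' with he | hx2
      · exact hne (htopinj s s' hs hs' he)
      · exact htopnotchunk s s' hs hx2
    · rcases Finset.mem_insert.1 hx' with he | hx2
      · exact htopnotchunk s' s hs' (he ▸ hx1)
      · exact Finset.disjoint_left.1 (hchunkdisj s s' hs hs' hne) hx1 hx2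
  have hblkcover : ∀ i : Fin l.length, ∃ s < m, i ∈ blk s := by
    intro i
    by_cases hi : i ∈ topsSet
    · rw [htopsSet] at hi
      obtain ⟨s, hs, rfl⟩ := Finset.mem_image.1 hi
      exact ⟨s, Finset.mem_range.1 hs, Finset.mem_insert_self _ _⟩
    · have hiQ : i ∈ Q := by rw [hQdef]; exact Finset.mem_sdiff.2 ⟨Finset.mem_univ _, hi⟩
      obtain ⟨s, hs, hmem⟩ := hchunkcover i hiQ
      exact ⟨s, hs, Finset.mem_insert_of_mem hmem⟩
  have hblkle : ∀ s < m, ∀ i ∈ blk s, (i:ℕ) ≤ (tops s : ℕ) := by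
    intro s hs i hi
    rcases Finset.mem_insert.1 hi with rfl | h
    · exact le_refl _
    · exact le_of_lt (hchunklt s hs i h)
  -- the matching
  refine ⟨(Finset.range m).image (fun s => (blk s).image l.get), ?_, ?_, ?_⟩
  · intro Es hEs
    obtain ⟨s, hs, rfl⟩ := Finset.mem_image.1 hEs
    have hsm := Finset.mem_range.1 hs
    apply hdom (tops s) (htopsD s)
    · rw [Finset.card_image_of_injOn hgetinj.injOn, hblkcard s hsm]
    · exact Finset.mem_image_of_mem _ (Finset.mem_insert_self _ _)
    · intro x hx
      obtain ⟨i, hi, rfl⟩ := Finset.mem_image.1 hx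
      exact get_mem_take i (tops s) (hblkle s hsm i hi)
  · intro E1 h1 E2 h2 hne
    obtain ⟨s1, hs1, rfl⟩ := Finset.mem_image.1 (Finset.mem_coe.1 h1)
    obtain ⟨s2, hs2, rfl⟩ := Finset.mem_image.1 (Finset.mem_coe.1 h2)
    have hs12 : s1 ≠ s2 := by rintro rfl; exact hne rfl
    exact (Finset.disjoint_image hgetinj).2
      (hblkdisj s1 s2 (Finset.mem_range.1 hs1) (Finset.mem_range.1 hs2) hs12)
  · ext x
    simp only [Finset.mem_biUnion, id]
    constructor
    · rintro ⟨E, hE, hxE⟩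
      obtain ⟨s, hs, rfl⟩ := Finset.mem_image.1 hE
      obtain ⟨i, hi, rfl⟩ := Finset.mem_image.1 hxE
      exact List.mem_toFinset.2 (l.get_mem i)
    · intro hx
      obtain ⟨i, hi⟩ := List.mem_iff_get.1 (List.mem_toFinset.1 hx)
      obtain ⟨s, hs, hmem⟩ := hblkcover i
      exact ⟨(blk s).image l.get, Finset.mem_image_of_mem _ (Finset.mem_range.2 hs),
        hi ▸ Finset.mem_image_of_mem _ hmem⟩

/-- Let `H` be an orderable `k`-hypergraph with `n = k·m` vertices,
with an elimination order in which each vertex is designated dominating (member of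
`D`) or isolating, the first `k - 1` vertices being designated dominating. With
`r_j = (k-1)·d_j - i_j`, where `d_j` (resp. `i_j`) is the number of designated
dominating (resp. isolating) vertices of index at least `j`, `H` has a perfect
matching iff all `r_j` are nonnegative. -/
theorem perfect_matching_iff_r_nonneg (k m : ℕ) (H : Finset (Finset V))
    (l : List V) (D : Finset V)
    (hl : l.Nodup) (hlen : l.length = k * m)
    (hH : ∀ E ∈ H, E ⊆ l.toFinset ∧ E.card = k)
    (hdes : ∀ i : Fin l.length,
      (l.get i ∈ D → DomAt k H l i) ∧ (l.get i ∉ D → IsoAt k H l i))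
    (hfirst : ∀ i : Fin l.length, (i : ℕ) + 1 < k → l.get i ∈ D) :
    (∃ M : Finset (Finset V), M ⊆ H ∧ IsPerfectMatching M l.toFinset) ↔
      ∀ j < l.length,
        0 ≤ ((k : ℤ) - 1) * (((l.drop j).filter fun x => x ∈ D).length : ℤ) -
              (((l.drop j).filter fun x => x ∉ D).length : ℤ) := by
  classical
  have hk1k : ∀ hk : 0 < k, ((k - 1 : ℕ) : ℤ) = (k : ℤ) - 1 :=
    fun hk => by rw [Nat.cast_sub (by omega : 1 ≤ k)]; norm_num
  constructor
  · rintro ⟨M, hMH, hdisj, hbi⟩ j hj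
    have hk : 0 < k := by
      rcases Nat.eq_zero_or_pos k with rfl | h
      · rw [Nat.zero_mul] at hlen; omega
      · exact h
    have hcnt := forward_count k H l D hl hH hdes M hMH hdisj hbi j
    have hd := length_filter_drop l (fun x => x ∈ D) j
    have hi := length_filter_drop l (fun x => x ∉ D) j
    simp only [length_filter_drop] at *
    rw [← hk1k hk, sub_nonneg]
    exact_mod_cast hcnt
  · intro hall
    rcases Nat.eq_zero_or_pos l.length with h0 | hpos
    · have hnil : l = [] := List.length_eq_zero_iff.mp h0
      subst hnil
      refine ⟨∅, Finset.empty_subset _, ?_, ?_⟩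
      · simp
      · simp
    · have hk : 0 < k := by
        rcases Nat.eq_zero_or_pos k with rfl | h
        · rw [Nat.zero_mul] at hlen; omega
        · exact h
      have hm : 0 < m := by
        rcases Nat.eq_zero_or_pos m with rfl | h
        · rw [Nat.mul_zero] at hlen; omega
        · exact h
      apply backward_construct k m H l D hl hlen hk hm (fun i => (hdes i).1)
      intro j hj
      have h := hall j hj
      simp only [length_filter_drop] at h
      rw [← hk1k hk, sub_nonneg] at h
      exact_mod_cast h
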